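/- For a site (C, J), the subtoposes of Sh(C, J) (i.e., geometric inclusions into Sh(C, J), up to equivalence) are in bijective correspondence with the Grothendieck topologies J' on C that contain J. -/

import Mathlib

open CategoryTheory Limits

universe u

/-- A (replete) full subcategory `P` of a category `E` is a subtopos if it is closed under
isomorphism and the inclusion functor admits a finite-limit-preserving left adjoint
(i.e. it is the direct image part of a geometric inclusion). -/
def IsSubtopos {E : Type*} [Category E] (P : E → Prop) : Prop :=
  (∀ X Y : E, (X ≅ Y) → P X → P Y) ∧
    ∃ _ : Reflective (ObjectProperty.ι P),
      Nonempty (PreservesFiniteLimits (reflector (ObjectProperty.ι P)))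

namespace SubtoposAux

open Opposite

lemma isIso_of_mono_of_section {E : Type*} [Category E] {A B : E} (m : A ⟶ B) [Mono m]
    (s : B ⟶ A) (hs : s ≫ m = 𝟙 B) : IsIso m := by
  refine ⟨s, ?_, hs⟩
  rw [← cancel_mono m, Category.assoc, hs, Category.id_comp, Category.comp_id]

variable {C : Type u} [SmallCategory C]

section Core

variable {D : Type*} [Category D] (i : D ⥤ (Cᵒᵖ ⥤ Type u)) [Reflective i]
  [PreservesFiniteLimits (reflector i)]

/-- If the reflector inverts the inclusion of a sieve, then every object in the essential
image of `i` satisfies the sheaf condition for that sieve. -/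
theorem dense_isSheafFor {X : C} {S : Sieve X}
    (hS : IsIso ((reflector i).map S.functorInclusion))
    {G : Cᵒᵖ ⥤ Type u} (hG : i.essImage G) :
    Presieve.IsSheafFor G (S : Presieve X) := by
  obtain ⟨G₀, ⟨e⟩⟩ := hG
  rw [Presieve.isSheafFor_iff_yonedaSheafCondition]
  intro f
  set adj := reflectorAdjunction i with hadj
  let Φ : ∀ A : Cᵒᵖ ⥤ Type u, (A ⟶ G) ≃ ((reflector i).obj A ⟶ G₀) := fun A =>
    { toFun := fun t => (adj.homEquiv A G₀).symm (t ≫ e.inv)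
      invFun := fun t => (adj.homEquiv A G₀) t ≫ e.hom
      left_inv := fun t => by simp
      right_inv := fun t => by simp }
  have hnat : ∀ {A' A : Cᵒᵖ ⥤ Type u} (t : A' ⟶ A) (v : A ⟶ G),
      Φ A' (t ≫ v) = (reflector i).map t ≫ Φ A v := by
    intro A' A t v
    show (adj.homEquiv A' G₀).symm ((t ≫ v) ≫ e.inv) = _
    rw [Category.assoc, Adjunction.homEquiv_naturality_left_symm]
    rfl
  refine ⟨(Φ _).symm (inv ((reflector i).map S.functorInclusion) ≫ Φ _ f), ?_, ?_⟩
  · apply (Φ _).injective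
    rw [hnat, Equiv.apply_symm_apply, IsIso.hom_inv_id_assoc]
  · intro g hg
    rw [← (Φ _).symm_apply_apply g]
    congr 1
    rw [IsIso.eq_inv_comp, ← hnat, hg]

/-- The pullback of a sieve gives a pullback square of presheaves. -/
def sievePullbackFst {X Y : C} (S : Sieve X) (f : Y ⟶ X) :
    (S.pullback f).functor ⟶ S.functor where
  app Z := TypeCat.ofHom fun g => ⟨g.1 ≫ f, g.2⟩
  naturality Z Z' h := by
    refine ConcreteCategory.hom_ext _ _ fun g => ?_
    exact Subtype.ext (Category.assoc _ _ _)

lemma sievePullback_comm {X Y : C} (S : Sieve X) (f : Y ⟶ X) :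
    sievePullbackFst S f ≫ S.functorInclusion =
      (S.pullback f).functorInclusion ≫ yoneda.map f := rfl

/-- The pullback square for sieves is a limit square. -/
def sievePullbackIsLimit {X Y : C} (S : Sieve X) (f : Y ⟶ X) :
    IsLimit (PullbackCone.mk (sievePullbackFst S f) (S.pullback f).functorInclusion
      (sievePullback_comm S f)) := by
  refine PullbackCone.IsLimit.mk _ (fun s =>
    { app := fun Z => TypeCat.ofHom fun u => ⟨s.snd.app Z u, show S (s.snd.app Z u ≫ f) from ?_⟩
      naturality := fun Z Z' h => ConcreteCategory.hom_ext _ _ fun u => Subtype.ext ?_ }) (fun s => ?_) (fun s => ?_)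
    (fun s m hm₁ hm₂ => ?_)
  · have h1 := types_congr_hom (NatTrans.congr_app s.condition Z) u
    simp only [NatTrans.comp_app, types_comp_apply] at h1
    have h2 : (s.fst.app Z u).1 = s.snd.app Z u ≫ f := h1
    rw [← h2]
    exact (s.fst.app Z u).2
  · exact types_congr_hom (s.snd.naturality h) u
  · refine NatTrans.ext (funext fun Z => ConcreteCategory.hom_ext _ _ fun u => Subtype.ext ?_)
    have h1 := types_congr_hom (NatTrans.congr_app s.condition Z) u
    exact (h1 : (s.fst.app Z u).1 = s.snd.app Z u ≫ f).symm
  · rfl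
  · refine NatTrans.ext (funext fun Z => ConcreteCategory.hom_ext _ _ fun u => Subtype.ext ?_)
    exact types_congr_hom (NatTrans.congr_app hm₂ Z) u

theorem pullback_dense {X Y : C} {S : Sieve X}
    (hS : IsIso ((reflector i).map S.functorInclusion)) (f : Y ⟶ X) :
    IsIso ((reflector i).map (S.pullback f).functorInclusion) := by
  have hlim := isLimitPullbackConeMapOfIsLimit (reflector i) (sievePullback_comm S f)
    (sievePullbackIsLimit S f)
  obtain ⟨l, -, hl⟩ := PullbackCone.IsLimit.lift' hlim
    ((reflector i).map (yoneda.map f) ≫ inv ((reflector i).map S.functorInclusion)) (𝟙 _)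
    (by simp)
  haveI : Mono ((reflector i).map (S.pullback f).functorInclusion) :=
    (reflector i).map_mono _
  exact isIso_of_mono_of_section _ l hl

theorem mem_finestTopology {X : C} {S : Sieve X}
    (hS : IsIso ((reflector i).map S.functorInclusion)) :
    S ∈ Sheaf.finestTopology i.essImage X := by
  refine Sheaf.mem_finestTopology_of_forall_isSheafFor ?_
  intro G hG Y f
  exact dense_isSheafFor i (pullback_dense i hS f) hG

/-- The sieve of arrows equalizing two elements of a presheaf. -/
def eqSieve {X : C} {F : Cᵒᵖ ⥤ Type u} (a b : F.obj (op X)) : Sieve X where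
  arrows Y f := F.map f.op a = F.map f.op b
  downward_closed := by
    intro Y Z f hf g
    show F.map (g ≫ f).op a = F.map (g ≫ f).op b
    rw [op_comp, FunctorToTypes.map_comp_apply, FunctorToTypes.map_comp_apply, hf]

theorem eqSieve_dense {X : C} {F : Cᵒᵖ ⥤ Type u} {a b : F.obj (op X)}
    (h : (reflector i).map (yonedaEquiv.symm a) = (reflector i).map (yonedaEquiv.symm b)) :
    IsIso ((reflector i).map (eqSieve a b).functorInclusion) := by
  have hw : (eqSieve a b).functorInclusion ≫ yonedaEquiv.symm a =
      (eqSieve a b).functorInclusion ≫ yonedaEquiv.symm b := by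
    refine NatTrans.ext (funext fun Z => ConcreteCategory.hom_ext _ _ fun g => ?_)
    show (yonedaEquiv.symm a).app Z g.1 = (yonedaEquiv.symm b).app Z g.1
    exact g.2
  have hfork : IsLimit (Fork.ofι (eqSieve a b).functorInclusion hw) := by
    refine Fork.IsLimit.mk _ (fun s =>
      { app := fun Z => TypeCat.ofHom fun v => ⟨s.ι.app Z v, ?_⟩
        naturality := fun Z Z' hz => ConcreteCategory.hom_ext _ _ fun v => Subtype.ext ?_ }) (fun s => ?_)
      (fun s m hm => ?_)
    · show F.map (s.ι.app Z v).op a = F.map (s.ι.app Z v).op b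
      have h1 := types_congr_hom (NatTrans.congr_app s.condition Z) v
      simp only [NatTrans.comp_app, types_comp_apply] at h1
      exact h1
    · exact types_congr_hom (s.ι.naturality hz) v
    · rfl
    · refine NatTrans.ext (funext fun Z => ConcreteCategory.hom_ext _ _ fun v => Subtype.ext ?_)
      have := types_congr_hom (NatTrans.congr_app hm Z) v
      exact this
  have hmap := isLimitForkMapOfIsLimit (reflector i) hw hfork
  obtain ⟨l, hl⟩ := Fork.IsLimit.lift' hmap (𝟙 _)
    (by rw [Category.id_comp, Category.id_comp, h])
  rw [Fork.ι_ofι] at hl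
  haveI : Mono ((reflector i).map (eqSieve a b).functorInclusion) := (reflector i).map_mono _
  exact isIso_of_mono_of_section _ l hl

/-- The key classification lemma: a sheaf for the finest topology for the essential image of a
reflective, left-exact inclusion lies in the essential image. -/
theorem essImage_of_isSheaf (F : Cᵒᵖ ⥤ Type u)
    (hF : Presieve.IsSheaf (Sheaf.finestTopology i.essImage) F) : i.essImage F := by
  obtain ⟨u, hu⟩ : ∃ u' : F ⟶ i.obj ((reflector i).obj F),
      u' = (reflectorAdjunction i).unit.app F := ⟨_, rfl⟩
  have hLu : IsIso ((reflector i).map u) := by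
    rw [hu]
    have h1 := (reflectorAdjunction i).left_triangle_components F
    haveI : IsIso ((reflector i).map ((reflectorAdjunction i).unit.app F) ≫
        (reflectorAdjunction i).counit.app ((reflector i).obj F)) := by
      rw [h1]; exact IsIso.id _
    exact IsIso.of_isIso_comp_right _ ((reflectorAdjunction i).counit.app ((reflector i).obj F))
  haveI := hLu
  -- injectivity of the unit
  have hinj : ∀ (X : C) (a b : F.obj (op X)), u.app (op X) a = u.app (op X) b → a = b := by
    intro X a b hab
    have hαβ : (reflector i).map (yonedaEquiv.symm a) = (reflector i).map (yonedaEquiv.symm b) := by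
      have h1 : yonedaEquiv.symm a ≫ u = yonedaEquiv.symm b ≫ u := by
        apply yonedaEquiv.injective
        rw [yonedaEquiv_comp, yonedaEquiv_comp, Equiv.apply_symm_apply,
          Equiv.apply_symm_apply, hab]
      rw [← cancel_mono ((reflector i).map u), ← Functor.map_comp, ← Functor.map_comp, h1]
    have hmem := mem_finestTopology i (eqSieve_dense i hαβ)
    exact (hF _ hmem).isSeparatedFor.ext fun Y f hf => hf
  -- surjectivity of the unit
  have hsurj : ∀ (X : C) (x : (i.obj ((reflector i).obj F)).obj (op X)),
      ∃ z, u.app (op X) z = x := by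
    intro X x
    let Sx : Sieve X :=
      { arrows := fun Y f => ∃ z : F.obj (op Y),
          u.app (op Y) z = (i.obj ((reflector i).obj F)).map f.op x
        downward_closed := by
          rintro Y Z f ⟨z, hz⟩ g
          refine ⟨F.map g.op z, ?_⟩
          rw [NatTrans.naturality_apply u, hz, ← FunctorToTypes.map_comp_apply, ← op_comp] }
    -- the canonical map Sx.functor ⟶ F
    let τ : Sx.functor ⟶ F :=
      { app := fun Z => TypeCat.ofHom fun g => g.2.choose
        naturality := fun Z Z' h => ConcreteCategory.hom_ext _ _ fun g => by
          apply hinj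
          show u.app Z' ((Sx.functor.map h g).2.choose) = u.app Z' (F.map h (g.2.choose))
          rw [(Sx.functor.map h g).2.choose_spec, NatTrans.naturality_apply u h,
            g.2.choose_spec, ← FunctorToTypes.map_comp_apply]
          rw [show (Sx.functor.map h g).1 = h.unop ≫ g.1 from rfl, op_comp, Quiver.Hom.op_unop] }
    have hcomm : τ ≫ u = Sx.functorInclusion ≫ yonedaEquiv.symm x := by
      refine NatTrans.ext (funext fun Z => ConcreteCategory.hom_ext _ _ fun g => ?_)
      show u.app Z (g.2.choose) = (yonedaEquiv.symm x).app Z g.1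
      rw [g.2.choose_spec]
      rfl
    have hpf : ∀ (s : PullbackCone u (yonedaEquiv.symm x)) (Z : Cᵒᵖ) (k : s.pt.obj Z),
        u.app Z (s.fst.app Z k) = (i.obj ((reflector i).obj F)).map (s.snd.app Z k).op x := by
      intro s Z k
      have h1 := types_congr_hom (NatTrans.congr_app s.condition Z) k
      simp only [NatTrans.comp_app, types_comp_apply] at h1
      exact h1
    let lift : ∀ s : PullbackCone u (yonedaEquiv.symm x), s.pt ⟶ Sx.functor := fun s =>
      { app := fun Z => TypeCat.ofHom fun k => ⟨s.snd.app Z k, ⟨s.fst.app Z k, hpf s Z k⟩⟩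
        naturality := fun Z Z' hz => ConcreteCategory.hom_ext _ _ fun k =>
          Subtype.ext (types_congr_hom (s.snd.naturality hz) k) }
    have hlim : IsLimit (PullbackCone.mk τ Sx.functorInclusion hcomm) := by
      refine PullbackCone.IsLimit.mk _ lift (fun s => ?_) (fun s => rfl)
        (fun s m hm₁ hm₂ => ?_)
      · refine NatTrans.ext (funext fun Z => ConcreteCategory.hom_ext _ _ fun k => ?_)
        apply hinj
        exact (((lift s).app Z k).2.choose_spec).trans (hpf s Z k).symm
      · refine NatTrans.ext (funext fun Z => ConcreteCategory.hom_ext _ _ fun k => Subtype.ext ?_)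
        exact types_congr_hom (NatTrans.congr_app hm₂ Z) k
    have hmap := isLimitPullbackConeMapOfIsLimit (reflector i) hcomm hlim
    obtain ⟨l, -, hl⟩ := PullbackCone.IsLimit.lift' hmap
      ((reflector i).map (yonedaEquiv.symm x) ≫ inv ((reflector i).map u)) (𝟙 _) (by simp)
    haveI : Mono ((reflector i).map Sx.functorInclusion) := (reflector i).map_mono _
    have hSx : IsIso ((reflector i).map Sx.functorInclusion) := isIso_of_mono_of_section _ l hl
    have hmem := mem_finestTopology i hSx
    -- amalgamate the family of local preimages
    let y : Presieve.FamilyOfElements F (Sx : Presieve X) := fun Y f hf => hf.choose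
    have hy : y.Compatible := by
      intro Y₁ Y₂ Z g₁ g₂ f₁ f₂ h₁ h₂ hgf
      apply hinj
      show u.app (op Z) (F.map g₁.op (h₁.choose)) = u.app (op Z) (F.map g₂.op (h₂.choose))
      rw [NatTrans.naturality_apply u, NatTrans.naturality_apply u,
        h₁.choose_spec, h₂.choose_spec, ← FunctorToTypes.map_comp_apply,
        ← FunctorToTypes.map_comp_apply, ← op_comp, ← op_comp, hgf]
    obtain ⟨z, hz, -⟩ := hF _ hmem y hy
    refine ⟨z, ?_⟩
    have hGsheaf : Presieve.IsSheaf (Sheaf.finestTopology i.essImage)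
        (i.obj ((reflector i).obj F)) :=
      Sheaf.sheaf_for_finestTopology _ ⟨(reflector i).obj F, ⟨Iso.refl _⟩⟩
    refine (hGsheaf _ hmem).isSeparatedFor.ext fun Y f hf => ?_
    rw [← NatTrans.naturality_apply u, hz f hf]
    exact hf.choose_spec
  haveI : ∀ Z : Cᵒᵖ, IsIso (u.app Z) := fun Z =>
    (isIso_iff_bijective _).2 ⟨fun a b hab => hinj Z.unop a b hab, fun x => hsurj Z.unop x⟩
  haveI : IsIso u := NatIso.isIso_of_isIso_app u
  exact ⟨(reflector i).obj F, ⟨(asIso u).symm⟩⟩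

end Core

section Forward

variable (J J' : GrothendieckTopology C) (h : J ≤ J')

include h

theorem isSheaf_le {P : Cᵒᵖ ⥤ Type u} (hP : Presheaf.IsSheaf J' P) : Presheaf.IsSheaf J P := by
  rw [isSheaf_iff_isSheaf_of_type] at hP ⊢
  exact Presieve.isSheaf_of_le _ h hP

/-- The inclusion of `J'`-sheaves into `J`-sheaves. -/
def sheafIncl : Sheaf J' (Type u) ⥤ Sheaf J (Type u) where
  obj G := ⟨G.val, isSheaf_le J J' h G.cond⟩
  map f := ⟨f.hom⟩

/-- Sheafification as left adjoint of the inclusion of `J'`-sheaves into `J`-sheaves. -/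
noncomputable def adjOne :
    (sheafToPresheaf J (Type u) ⋙ presheafToSheaf J' (Type u)) ⊣ sheafIncl J J' h :=
  Adjunction.mkOfHomEquiv
    { homEquiv := fun X Y =>
        ((sheafificationAdjunction J' (Type u)).homEquiv X.val Y).trans
          { toFun := fun g => ⟨g⟩
            invFun := fun g => g.hom
            left_inv := fun g => rfl
            right_inv := fun g => rfl }
      homEquiv_naturality_left_symm := fun f g => by
        exact Adjunction.homEquiv_naturality_left_symm (sheafificationAdjunction J' (Type u)) f.hom g.hom
      homEquiv_naturality_right := fun f g => by
        apply Sheaf.hom_ext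
        exact Adjunction.homEquiv_naturality_right (sheafificationAdjunction J' (Type u)) f g }

/-- `J'`-sheaves are equivalent to the full subcategory of `J`-sheaves that are `J'`-sheaves. -/
def eqv : Sheaf J' (Type u) ≌
    ObjectProperty.FullSubcategory (fun X : Sheaf J (Type u) => Presheaf.IsSheaf J' X.val) where
  functor :=
    { obj := fun G => ⟨⟨G.val, isSheaf_le J J' h G.cond⟩, G.cond⟩
      map := fun f => ⟨⟨f.hom⟩⟩ }
  inverse :=
    { obj := fun Y => ⟨Y.obj.val, Y.property⟩
      map := fun f => ⟨f.hom.hom⟩ }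
  unitIso := NatIso.ofComponents (fun X => Iso.refl _) (by intros; rfl)
  counitIso := NatIso.ofComponents (fun X => Iso.refl _) (by intros; rfl)
  functor_unitIso_comp := by intros; rfl

/-- The full subcategory of `J'`-sheaves is reflective in `J`-sheaves. -/
noncomputable def subtoposReflective :
    Reflective (ObjectProperty.ι
      (fun X : Sheaf J (Type u) => Presheaf.IsSheaf J' X.val)) where
  L := (sheafToPresheaf J (Type u) ⋙ presheafToSheaf J' (Type u)) ⋙ (eqv J J' h).functor
  adj := ((adjOne J J' h).comp (eqv J J' h).toAdjunction).ofNatIsoRight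
    (NatIso.ofComponents (fun Y => Iso.refl _) (by intros; rfl))

theorem isSubtopos_sheaves :
    IsSubtopos (fun X : Sheaf J (Type u) => Presheaf.IsSheaf J' X.val) := by
  constructor
  · intro X Y e hX
    rw [isSheaf_iff_isSheaf_of_type] at hX ⊢
    exact Presieve.isSheaf_iso J' ((sheafToPresheaf J (Type u)).mapIso e) hX
  · refine ⟨subtoposReflective J J' h, ⟨?_⟩⟩
    show PreservesFiniteLimits
      ((sheafToPresheaf J (Type u) ⋙ presheafToSheaf J' (Type u)) ⋙ (eqv J J' h).functor)
    haveI := comp_preservesFiniteLimits (sheafToPresheaf J (Type u))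
      (presheafToSheaf J' (Type u))
    exact comp_preservesFiniteLimits _ _

end Forward

section Backward

variable (J : GrothendieckTopology C) (P : Sheaf J (Type u) → Prop)

/-- The inclusion of the subtopos into presheaves. -/
abbrev bigIncl : ObjectProperty.FullSubcategory P ⥤ (Cᵒᵖ ⥤ Type u) :=
  ObjectProperty.ι P ⋙ sheafToPresheaf J (Type u)

noncomputable def bigReflective [Reflective (ObjectProperty.ι P)] :
    Reflective (bigIncl J P) where
  L := presheafToSheaf J (Type u) ⋙ reflector (ObjectProperty.ι P)
  adj := (sheafificationAdjunction J (Type u)).comp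
    (reflectorAdjunction (ObjectProperty.ι P))

theorem backward (hiso : ∀ X Y : Sheaf J (Type u), (X ≅ Y) → P X → P Y)
    [Reflective (ObjectProperty.ι P)]
    [PreservesFiniteLimits (reflector (ObjectProperty.ι P))] :
    ∃ J' : GrothendieckTopology C, J ≤ J' ∧
      ∀ X : Sheaf J (Type u), Presheaf.IsSheaf J' X.val ↔ P X := by
  letI := bigReflective J P
  letI : PreservesFiniteLimits (reflector (bigIncl J P)) := by
    show PreservesFiniteLimits
      (presheafToSheaf J (Type u) ⋙ reflector (ObjectProperty.ι P))
    exact comp_preservesFiniteLimits _ _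
  refine ⟨Sheaf.finestTopology (bigIncl J P).essImage, ?_, ?_⟩
  · apply Sheaf.le_finestTopology
    rintro G ⟨d, ⟨e⟩⟩
    have hd := d.obj.cond
    rw [isSheaf_iff_isSheaf_of_type] at hd
    exact Presieve.isSheaf_iso J e hd
  · intro X
    constructor
    · intro hX
      rw [isSheaf_iff_isSheaf_of_type] at hX
      obtain ⟨d, ⟨e⟩⟩ := essImage_of_isSheaf (bigIncl J P) X.val hX
      exact hiso d.obj X ((fullyFaithfulSheafToPresheaf J (Type u)).preimageIso e) d.property
    · intro hX
      have hmem : (bigIncl J P).essImage X.val := ⟨⟨X, hX⟩, ⟨Iso.refl _⟩⟩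
      rw [isSheaf_iff_isSheaf_of_type]
      exact Sheaf.sheaf_for_finestTopology _ hmem

end Backward

end SubtoposAux

/-- The subtoposes of `Sh(C, J)` are in bijective correspondence with the Grothendieck
topologies on `C` containing `J`; the bijection sends such a topology `J'` to the
subtopos of `J'`-sheaves. -/
theorem subtoposes_biject_with_finer_topologies (C : Type u) [SmallCategory C]
    (J : GrothendieckTopology C) :
    ∃ e : {J' : GrothendieckTopology C // J ≤ J'} ≃
          {P : Sheaf J (Type u) → Prop // IsSubtopos P},
      ∀ J' : {J' : GrothendieckTopology C // J ≤ J'},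
        (e J').1 = fun X => Presheaf.IsSheaf J'.1 X.val := by
  classical
  refine ⟨Equiv.ofBijective
    (fun J' => ⟨fun X => Presheaf.IsSheaf J'.1 X.val,
      SubtoposAux.isSubtopos_sheaves J J'.1 J'.2⟩) ⟨?_, ?_⟩, fun J' => rfl⟩
  · intro J₁ J₂ hJ
    have h1 : (fun X : Sheaf J (Type u) => Presheaf.IsSheaf J₁.1 X.val) =
        (fun X : Sheaf J (Type u) => Presheaf.IsSheaf J₂.1 X.val) :=
      congrArg Subtype.val hJ
    apply Subtype.ext
    rw [topology_eq_iff_same_sheaves]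
    intro F
    constructor
    · intro hF
      have hFJ : Presheaf.IsSheaf J F := by
        rw [isSheaf_iff_isSheaf_of_type]
        exact Presieve.isSheaf_of_le _ J₁.2 hF
      have h2 := congrFun h1 (⟨F, hFJ⟩ : Sheaf J (Type u))
      rw [← isSheaf_iff_isSheaf_of_type, show Presheaf.IsSheaf J₂.1 F =
        Presheaf.IsSheaf J₂.1 (Sheaf.val (⟨F, hFJ⟩ : Sheaf J (Type u))) from rfl, ← h2,
        isSheaf_iff_isSheaf_of_type]
      exact hF
    · intro hF
      have hFJ : Presheaf.IsSheaf J F := by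
        rw [isSheaf_iff_isSheaf_of_type]
        exact Presieve.isSheaf_of_le _ J₂.2 hF
      have h2 := congrFun h1 (⟨F, hFJ⟩ : Sheaf J (Type u))
      rw [← isSheaf_iff_isSheaf_of_type, show Presheaf.IsSheaf J₁.1 F =
        Presheaf.IsSheaf J₁.1 (Sheaf.val (⟨F, hFJ⟩ : Sheaf J (Type u))) from rfl, h2,
        isSheaf_iff_isSheaf_of_type]
      exact hF
  · rintro ⟨P, hP⟩
    obtain ⟨hiso, hR, ⟨hLex⟩⟩ := hP
    letI := hR
    letI : PreservesFiniteLimits (reflector (ObjectProperty.ι P)) := hLex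
    obtain ⟨J', hle, hch⟩ := SubtoposAux.backward J P hiso
    refine ⟨⟨J', hle⟩, ?_⟩
    apply Subtype.ext
    funext X
    exact propext (hch X)
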